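/- Let λ, μ, ν be integer partitions and suppose (λ, μ, ν) is either (⊞,⊞)-storable, (⊞,⊟)-storable, (⊟,⊞)-storable, or strongly (⊟,⊟)-storable. Let θ = diag(λ, μ, ν) be the diagonal transformation, computed by the formula corresponding to the storability type of (λ, μ, ν). Then diag(λ, θ, ν) = μ, where this second diagonal transformation is computed by the formula corresponding to the storability type of (λ, θ, ν) (namely strongly (⊟,⊟), (⊞,⊟), (⊟,⊞), (⊞,⊞) respectively). -/
import Mathlib


/-- An integer partition, modeled as a function `l : ℕ → ℕ` where `l i` is the part
`λ_{i+1}` (0-indexed): weakly decreasing with only finitely many nonzero entries. -/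
def IsPartition (l : ℕ → ℕ) : Prop :=
  (∀ i, l (i + 1) ≤ l i) ∧ ∃ N, ∀ i, N ≤ i → l i = 0

/-- `(l, m)` is a storable pair: `λ_i ≥ μ_i ≥ λ_{i+1}` for all `i ≥ 1` (0-indexed). -/
def StorablePair (l m : ℕ → ℕ) : Prop :=
  ∀ i, m i ≤ l i ∧ l (i + 1) ≤ m i

/-- `(λ, μ, ν)` is `(⊞,⊞)`-storable: `(λ, μ)` and `(ν, μ)` are storable pairs. -/
def StorablePP (l m n : ℕ → ℕ) : Prop := StorablePair l m ∧ StorablePair n m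

/-- `(λ, μ, ν)` is `(⊞,⊟)`-storable: `(λ, μ)` and `(μ, ν)` are storable pairs. -/
def StorablePM (l m n : ℕ → ℕ) : Prop := StorablePair l m ∧ StorablePair m n

/-- `(λ, μ, ν)` is `(⊟,⊞)`-storable: `(μ, λ)` and `(ν, μ)` are storable pairs. -/
def StorableMP (l m n : ℕ → ℕ) : Prop := StorablePair m l ∧ StorablePair n m

/-- `(λ, μ, ν)` is `(⊟,⊟)`-storable: `(μ, λ)` and `(μ, ν)` are storable pairs. -/
def StorableMM (l m n : ℕ → ℕ) : Prop := StorablePair m l ∧ StorablePair m n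

/-- `(λ, μ, ν)` is strongly `(⊟,⊟)`-storable: `(⊟,⊟)`-storable with `λ_1 = μ_1` or `μ_1 = ν_1`. -/
def StronglyStorableMM (l m n : ℕ → ℕ) : Prop :=
  StorableMM l m n ∧ (l 0 = m 0 ∨ m 0 = n 0)

/-- Diagonal transformation for a `(⊞,⊞)`-storable triplet:
`θ_1 = max(λ_1, ν_1)`, `θ_i = min(λ_{i−1}, ν_{i−1}) + max(λ_i, ν_i) − μ_{i−1}` for `i ≥ 2`. -/
def diagPP (l m n : ℕ → ℕ) : ℕ → ℕ
  | 0 => max (l 0) (n 0)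
  | j + 1 => min (l j) (n j) + max (l (j + 1)) (n (j + 1)) - m j

/-- Diagonal transformation for a `(⊞,⊟)`-storable triplet:
`θ_1 = λ_1 + max(λ_2, ν_1) − μ_1`, `θ_i = min(λ_i, ν_{i−1}) + max(λ_{i+1}, ν_i) − μ_i` for `i ≥ 2`. -/
def diagPM (l m n : ℕ → ℕ) : ℕ → ℕ
  | 0 => l 0 + max (l 1) (n 0) - m 0
  | j + 1 => min (l (j + 1)) (n j) + max (l (j + 2)) (n (j + 1)) - m (j + 1)

/-- Diagonal transformation for a `(⊟,⊞)`-storable triplet: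
`θ_1 = ν_1 + max(λ_1, ν_2) − μ_1`, `θ_i = min(λ_{i−1}, ν_i) + max(λ_i, ν_{i+1}) − μ_i` for `i ≥ 2`. -/
def diagMP (l m n : ℕ → ℕ) : ℕ → ℕ
  | 0 => n 0 + max (l 0) (n 1) - m 0
  | j + 1 => min (l j) (n (j + 1)) + max (l (j + 1)) (n (j + 2)) - m (j + 1)

/-- Diagonal transformation for a `(⊟,⊟)`-storable triplet:
`θ_i = min(λ_i, ν_i) + max(λ_{i+1}, ν_{i+1}) − μ_{i+1}` for all `i ≥ 1`. -/
def diagMM (l m n : ℕ → ℕ) (j : ℕ) : ℕ :=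
  min (l j) (n j) + max (l (j + 1)) (n (j + 1)) - m (j + 1)

/-- The diagonal transformation is an involution: if `(λ, μ, ν)` is `(⊞,⊞)`-, `(⊞,⊟)`-,
`(⊟,⊞)`- or strongly `(⊟,⊟)`-storable, and `θ = diag(λ, μ, ν)` is computed by the formula
for that type, then `diag(λ, θ, ν) = μ`, the second diagonal transformation computed by
the formula for the type of `(λ, θ, ν)` (namely strongly `(⊟,⊟)`, `(⊞,⊟)`, `(⊟,⊞)`,
`(⊞,⊞)` respectively). -/
theorem diag_involutive (l m n : ℕ → ℕ)
    (hl : IsPartition l) (hm : IsPartition m) (hn : IsPartition n) :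
    (StorablePP l m n → diagMM l (diagPP l m n) n = m) ∧
    (StorablePM l m n → diagPM l (diagPM l m n) n = m) ∧
    (StorableMP l m n → diagMP l (diagMP l m n) n = m) ∧
    (StronglyStorableMM l m n → diagPP l (diagMM l m n) n = m) := by
  refine ⟨?_, ?_, ?_, ?_⟩
  · rintro ⟨h1, h2⟩
    funext j
    have a1 := h1 j
    have a2 := h2 j
    simp only [diagMM, diagPP]
    omega
  · rintro ⟨h1, h2⟩
    funext j
    cases j with
    | zero =>
      have a1 := h1 0
      simp only [diagPM]
      omega
    | succ j =>
      have a1 := h1 (j + 1)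
      have a2 := h2 j
      simp only [diagPM]
      omega
  · rintro ⟨h1, h2⟩
    funext j
    cases j with
    | zero =>
      have a2 := h2 0
      simp only [diagMP]
      omega
    | succ j =>
      have a1 := h1 j
      have a2 := h2 (j + 1)
      simp only [diagMP]
      omega
  · rintro ⟨⟨h1, h2⟩, hd⟩
    funext j
    cases j with
    | zero =>
      have a1 := h1 0
      have a2 := h2 0
      simp only [diagPP, diagMM]
      omega
    | succ j =>
      have a1 := h1 j
      have a2 := h2 j
      simp only [diagPP, diagMM]
      omega
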